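/- Let $\Delta \subseteq \mathbb{R}^n$ be a convex body of positive volume, $\tau^+ \in \mathbb{R}$, and let $(\Delta_\tau)_{\tau \leq \tau^+}$ be a family of convex bodies in $\mathbb{R}^n$ such that: (1) $\tau \mapsto \Delta_\tau$ is decreasing; (2) $\Delta_\tau \to \Delta$ in the Hausdorff metric as $\tau \to -\infty$; (3) the family is concave, i.e., $\Delta_{t\tau + (1-t)\tau'} \supseteq t\Delta_\tau + (1-t)\Delta_{\tau'}$ for all $\tau, \tau' \leq \tau^+$ and $t \in [0,1]$; (4) $\Delta_{\tau^+} = \bigcap_{\tau < \tau^+} \Delta_\tau$. Then $\mathrm{vol}(\Delta_{\tau'}) > 0$ for all $\tau' < \tau^+$, and $\tau \mapsto \Delta_\tau$ is continuous in the Hausdorff metric on $(-\infty, \tau^+)$. -/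

import Mathlib

open Filter MeasureTheory Metric
open scoped Pointwise

lemma add_singleton_eq_vadd {E : Type*} [AddCommGroup E] (s : Set E) (v : E) :
    s + {v} = v +ᵥ s := by
  ext x
  simp only [Set.mem_vadd_set, Set.add_singleton, Set.mem_image]
  constructor
  · rintro ⟨y, h1, rfl⟩; exact ⟨y, h1, by rw [vadd_eq_add, add_comm]⟩
  · rintro ⟨y, h1, rfl⟩; exact ⟨y, h1, by rw [vadd_eq_add, add_comm]⟩

theorem stmt12 {n : ℕ} (Δlim : Set (EuclideanSpace ℝ (Fin n))) (τp : ℝ)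
    (Δ : ℝ → Set (EuclideanSpace ℝ (Fin n)))
    (hΔne : Δlim.Nonempty) (hΔc : IsCompact Δlim) (hΔconv : Convex ℝ Δlim)
    (hΔvol : 0 < volume Δlim)
    (hbody : ∀ τ ≤ τp, (Δ τ).Nonempty ∧ IsCompact (Δ τ) ∧ Convex ℝ (Δ τ))
    (hdec : ∀ σ τ : ℝ, σ ≤ τ → τ ≤ τp → Δ τ ⊆ Δ σ)
    (hlim : Tendsto (fun τ => hausdorffDist (Δ τ) Δlim) atBot (nhds 0))
    (hconc : ∀ τ ≤ τp, ∀ τ' ≤ τp, ∀ t : ℝ, 0 ≤ t → t ≤ 1 →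
        t • Δ τ + (1 - t) • Δ τ' ⊆ Δ (t * τ + (1 - t) * τ'))
    (htp : Δ τp = ⋂ (τ : ℝ) (_ : τ < τp), Δ τ) :
    (∀ τ' < τp, 0 < volume (Δ τ')) ∧
    (∀ τ < τp, ∀ ε > 0, ∃ δ > 0, ∀ σ < τp, |σ - τ| < δ →
        hausdorffDist (Δ σ) (Δ τ) < ε) := by
  obtain ⟨pp, hpp⟩ := (hbody τp le_rfl).1
  constructor
  · -- Part 1: positivity of volume
    -- First find some τ₀ ≤ τp with positive volume
    have hex : ∃ k : ℕ, volume (Δ (τp - k)) ≠ 0 := by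
      by_contra h
      push_neg at h
      set S : Set (EuclideanSpace ℝ (Fin n)) := ⋃ k : ℕ, Δ (τp - k) with hS
      have hSvol : volume S = 0 := measure_iUnion_null (by simpa using h)
      have hSconv : Convex ℝ S := by
        intro x hx y hy a b ha hb hab
        simp only [hS, Set.mem_iUnion] at hx hy ⊢
        obtain ⟨k, hk⟩ := hx
        obtain ⟨m, hm⟩ := hy
        refine ⟨max k m, ?_⟩
        have h1 : Δ (τp - k) ⊆ Δ (τp - (max k m : ℕ)) := by
          apply hdec
          · have : (k : ℝ) ≤ (max k m : ℕ) := by exact_mod_cast Nat.le_max_left k m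
            linarith
          · have : (0 : ℝ) ≤ (k : ℝ) := Nat.cast_nonneg k
            linarith
        have h2 : Δ (τp - m) ⊆ Δ (τp - (max k m : ℕ)) := by
          apply hdec
          · have : (m : ℝ) ≤ (max k m : ℕ) := by exact_mod_cast Nat.le_max_right k m
            linarith
          · have : (0 : ℝ) ≤ (m : ℝ) := Nat.cast_nonneg m
            linarith
        exact (hbody (τp - (max k m : ℕ))
          (by have : (0:ℝ) ≤ ((max k m : ℕ) : ℝ) := Nat.cast_nonneg _; linarith)).2.2
          (h1 hk) (h2 hm) ha hb hab
      have hclos : Δlim ⊆ closure S := by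
        intro z hz
        rw [Metric.mem_closure_iff]
        intro ε hε
        have hev : ∀ᶠ τ in atBot, hausdorffDist (Δ τ) Δlim < ε :=
          hlim.eventually (gt_mem_nhds hε)
        obtain ⟨T, hT⟩ := eventually_atBot.mp hev
        obtain ⟨k, hk⟩ := exists_nat_ge (τp - T)
        have hτk : τp - (k : ℝ) ≤ T := by linarith
        have hkp : τp - (k : ℝ) ≤ τp := by
          have : (0:ℝ) ≤ (k:ℝ) := Nat.cast_nonneg k; linarith
        have hne := hbody (τp - k) hkp
        have hfin : EMetric.hausdorffEdist (Δ (τp - k)) Δlim ≠ ⊤ :=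
          hausdorffEdist_ne_top_of_nonempty_of_bounded hne.1 hΔne
            hne.2.1.isBounded hΔc.isBounded
        obtain ⟨y, hy, hyd⟩ := exists_dist_lt_of_hausdorffDist_lt' hz (hT _ hτk) hfin
        exact ⟨y, Set.mem_iUnion.2 ⟨k, hy⟩, by rwa [dist_comm]⟩
      have hcl : volume (closure S) ≤ volume S + volume (frontier S) := by
        refine le_trans (measure_mono ?_) (measure_union_le _ _)
        rw [closure_eq_interior_union_frontier]
        exact Set.union_subset_union_left _ interior_subset
      rw [hSvol, hSconv.addHaar_frontier volume, add_zero] at hcl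
      exact absurd (le_trans (measure_mono hclos) hcl) hΔvol.not_ge
    obtain ⟨k₀, hk₀⟩ := hex
    have hτ₀p : τp - (k₀ : ℝ) ≤ τp := by
      have : (0:ℝ) ≤ (k₀:ℝ) := Nat.cast_nonneg k₀; linarith
    have hvol0 : 0 < volume (Δ (τp - k₀)) := lt_of_le_of_ne (zero_le) (Ne.symm hk₀)
    intro τ' hτ'
    rcases le_or_gt τ' (τp - k₀) with hle | hgt
    · exact lt_of_lt_of_le hvol0 (measure_mono (hdec τ' (τp - k₀) hle hτ₀p))
    · set τ₀ : ℝ := τp - k₀ with hτ₀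
      have hden : 0 < τp - τ₀ := by linarith
      set t : ℝ := (τp - τ') / (τp - τ₀) with hts
      have ht0 : 0 < t := div_pos (by linarith) hden
      have ht1 : t < 1 := (div_lt_one hden).2 (by linarith)
      have hcomb : t * τ₀ + (1 - t) * τp = τ' := by
        rw [hts]; field_simp; ring
      have hsub := hconc τ₀ hτ₀p τp le_rfl t ht0.le ht1.le
      rw [hcomb] at hsub
      have hsub2 : ((1 - t) • pp) +ᵥ (t • Δ τ₀) ⊆ Δ τ' := by
        refine Set.Subset.trans ?_ hsub
        rw [← add_singleton_eq_vadd]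
        exact Set.add_subset_add Set.Subset.rfl
          (Set.singleton_subset_iff.2 (Set.smul_mem_smul_set hpp))
      calc (0 : ENNReal) < volume (t • Δ τ₀) := by
            rw [Measure.addHaar_smul]
            exact ENNReal.mul_pos
              (ENNReal.ofReal_pos.2 (abs_pos.2 (pow_ne_zero _ ht0.ne'))).ne' hk₀
        _ = volume (((1 - t) • pp) +ᵥ (t • Δ τ₀)) := (measure_vadd volume _ _).symm
        _ ≤ volume (Δ τ') := measure_mono hsub2
  · -- Part 2: continuity
    intro τ hτ ε hε
    have hK := hbody (τ - 1) (by linarith)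
    set C : ℝ := diam (Δ (τ - 1)) + 1 with hC
    have hC0 : 0 < C := by
      have := Metric.diam_nonneg (s := Δ (τ - 1)); linarith
    have hτpτ : 0 < τp - τ := by linarith
    have key : ∀ a b : ℝ, τ - 1 ≤ a → a ≤ b → b < τp →
        hausdorffDist (Δ b) (Δ a) ≤ (b - a) / (τp - a) * C := by
      intro a b ha hab hb
      have hden : 0 < τp - a := by linarith
      set t : ℝ := (b - a) / (τp - a) with hts
      have ht0 : 0 ≤ t := div_nonneg (by linarith) hden.le
      have ht1 : t ≤ 1 := (div_le_one hden).2 (by linarith)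
      have hcomb : t * τp + (1 - t) * a = b := by
        rw [hts]; field_simp; ring
      have hsub := hconc τp le_rfl a (by linarith) t ht0 ht1
      rw [hcomb] at hsub
      have hbK : Δ b ⊆ Δ a := hdec a b hab hb.le
      have haK : Δ a ⊆ Δ (τ - 1) := hdec (τ - 1) a ha (by linarith)
      have hppK : pp ∈ Δ (τ - 1) := hdec (τ - 1) τp (by linarith) le_rfl hpp
      refine hausdorffDist_le_of_mem_dist (mul_nonneg ht0 hC0.le) ?_ ?_
      · intro x hx
        exact ⟨x, hbK hx, by rw [dist_self]; exact mul_nonneg ht0 hC0.le⟩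
      · intro x hx
        refine ⟨t • pp + (1 - t) • x,
          hsub (Set.add_mem_add (Set.smul_mem_smul_set hpp) (Set.smul_mem_smul_set hx)), ?_⟩
        have hxy : x - (t • pp + (1 - t) • x) = t • (x - pp) := by module
        rw [dist_eq_norm, hxy, norm_smul, Real.norm_eq_abs, abs_of_nonneg ht0]
        have h1 : ‖x - pp‖ = dist x pp := (dist_eq_norm x pp).symm
        rw [h1]
        have hd : dist x pp ≤ diam (Δ (τ - 1)) :=
          dist_le_diam_of_mem hK.2.1.isBounded (haK hx) hppK
        have h2 : dist x pp ≤ C := by rw [hC]; linarith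
        exact mul_le_mul_of_nonneg_left h2 ht0
    refine ⟨min 1 ((τp - τ) * ε / C), lt_min one_pos (div_pos (mul_pos hτpτ hε) hC0), ?_⟩
    intro σ hσ hdist
    have h1 : |σ - τ| < 1 := lt_of_lt_of_le hdist (min_le_left _ _)
    have h2 : |σ - τ| < (τp - τ) * ε / C := lt_of_lt_of_le hdist (min_le_right _ _)
    rcases le_or_gt τ σ with hc | hc
    · have hkey := key τ σ (by linarith) hc hσ
      refine lt_of_le_of_lt hkey ?_
      have hst : σ - τ ≤ |σ - τ| := le_abs_self _
      rw [div_mul_eq_mul_div, div_lt_iff₀ hτpτ]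
      have h3 : σ - τ < (τp - τ) * ε / C := lt_of_le_of_lt hst h2
      calc (σ - τ) * C < ((τp - τ) * ε / C) * C := mul_lt_mul_of_pos_right h3 hC0
        _ = ε * (τp - τ) := by field_simp
    · have hst : τ - σ ≤ |σ - τ| := by rw [abs_sub_comm]; exact le_abs_self _
      have haσ : τ - 1 ≤ σ := by linarith
      have hkey := key σ τ haσ hc.le hτ
      rw [hausdorffDist_comm]
      refine lt_of_le_of_lt hkey ?_
      have hmon : (τ - σ) / (τp - σ) ≤ (τ - σ) / (τp - τ) := by
        gcongr <;> linarith
      refine lt_of_le_of_lt (mul_le_mul_of_nonneg_right hmon hC0.le) ?_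
      rw [div_mul_eq_mul_div, div_lt_iff₀ hτpτ]
      have h3 : τ - σ < (τp - τ) * ε / C := lt_of_le_of_lt hst h2
      calc (τ - σ) * C < ((τp - τ) * ε / C) * C := mul_lt_mul_of_pos_right h3 hC0
        _ = ε * (τp - τ) := by field_simp
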